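/- Consider a 2-layer network f_j(x) = Σ_{i=1}^{n₁} W²_{j,i} σ(y_i(x)) + b²_j, where y_i(x) = (W¹x + b¹)_i, W¹ ∈ ℝ^{n₁×n₀}, W² ∈ ℝ^{n_2×n₁}, b¹ ∈ ℝ^{n₁}, b² ∈ ℝ^{n_2}, and σ : ℝ → ℝ. Suppose for each i there are reals l_i ≤ u_i and quadratic bounds with parameters η_{U,i}, η_{L,i} ∈ ℝ, α_{U,i}, α_{L,i} ≥ 0, β_{U,i}, β_{L,i} ∈ ℝ such that η_{L,i} y² + α_{L,i}(y + β_{L,i}) ≤ σ(y) ≤ η_{U,i} y² + α_{U,i}(y + β_{U,i}) for all y ∈ [l_i, u_i]. Define upper-bound parameters (κ_i, λ_i, δ_i) = (η_{U,i}, α_{U,i}, β_{U,i}) if W²_{j,i} ≥ 0 and (η_{L,i}, α_{L,i}, β_{L,i}) if W²_{j,i} < 0, and lower-bound parameters (κ'_i, λ'_i, δ'_i) defined with the roles of the U- and L-parameters exchanged. Then for every x ∈ ℝ^{n₀} such that y_i(x) ∈ [l_i, u_i] for all i: Σ_i W²_{j,i}(κ'_i y_i(x)² + λ'_i(y_i(x)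 + δ'_i)) + b²_j ≤ f_j(x) ≤ Σ_i W²_{j,i}(κ_i y_i(x)² + λ_i(y_i(x) + δ_i)) + b²_j; both bounding expressions are quadratic functions of x of the form xᵀ W¹ᵀ D W¹ x + (linear in x) + constant with D diagonal. -/

import Mathlib

open Matrix

lemma crown_quadform_aux {n₀ n₁ : ℕ} (W1 : Matrix (Fin n₁) (Fin n₀) ℝ)
    (b1 D lam δ : Fin n₁ → ℝ) (B : ℝ) :
    ∃ (c : Fin n₀ → ℝ) (s : ℝ), ∀ x : Fin n₀ → ℝ,
      (∑ i, (D i * ((W1.mulVec x + b1) i) ^ 2 + lam i * ((W1.mulVec x + b1) i + δ i))) + B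
        = x ⬝ᵥ (W1.transpose * Matrix.diagonal D * W1).mulVec x + c ⬝ᵥ x + s := by
  refine ⟨W1.transpose.mulVec (fun i => 2 * D i * b1 i + lam i),
    (∑ i, (D i * (b1 i) ^ 2 + lam i * (b1 i + δ i))) + B, fun x => ?_⟩
  have h1 : x ⬝ᵥ (W1.transpose * Matrix.diagonal D * W1).mulVec x
      = ∑ i, D i * (W1.mulVec x i) ^ 2 := by
    rw [← Matrix.mulVec_mulVec, ← Matrix.mulVec_mulVec, Matrix.dotProduct_mulVec,
      Matrix.vecMul_transpose]
    simp [dotProduct, Matrix.mulVec_diagonal]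
    exact Finset.sum_congr rfl fun i _ => by ring
  have h2 : W1.transpose.mulVec (fun i => 2 * D i * b1 i + lam i) ⬝ᵥ x
      = ∑ i, (2 * D i * b1 i + lam i) * (W1.mulVec x i) := by
    rw [dotProduct_comm, Matrix.dotProduct_mulVec, Matrix.vecMul_transpose]
    simp [dotProduct, mul_comm]
  have h3 : (∑ i, D i * (W1.mulVec x i) ^ 2)
      + ((∑ i, (2 * D i * b1 i + lam i) * (W1.mulVec x i))
        + (∑ i, (D i * (b1 i) ^ 2 + lam i * (b1 i + δ i))))
      = ∑ i, (D i * ((W1.mulVec x + b1) i) ^ 2 + lam i * ((W1.mulVec x + b1) i + δ i)) := by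
    rw [← Finset.sum_add_distrib, ← Finset.sum_add_distrib]
    exact Finset.sum_congr rfl fun i _ => by simp only [Pi.add_apply]; ring
  rw [h1, h2]
  linarith [h3]


/-- CROWN quadratic-approximation bound for a 2-layer network
`f_j(x) = Σ_i W2_{j,i} σ((W1 x + b1)_i) + b2_j`.  Each activation is sandwiched between a
quadratic lower bound `ηL y² + αL (y + βL)` and a quadratic upper bound `ηU y² + αU (y + βU)`
on its pre-activation interval `[l i, u i]`; the bounds are combined according to the sign of
the outgoing weight `W2 j i`.  Moreover, both bounding expressions are quadratic functions of
`x` of the form `xᵀ W1ᵀ D W1 x + (linear in x) + constant` with `D` diagonal. -/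

theorem crown_quadratic_two_layer_bounds (n₀ n₁ n₂ : ℕ)
    (W1 : Matrix (Fin n₁) (Fin n₀) ℝ) (W2 : Matrix (Fin n₂) (Fin n₁) ℝ)
    (b1 : Fin n₁ → ℝ) (b2 : Fin n₂ → ℝ) (σ : ℝ → ℝ)
    (l u ηU ηL αU αL βU βL : Fin n₁ → ℝ)
    (hlu : ∀ i, l i ≤ u i)
    (hαU : ∀ i, 0 ≤ αU i) (hαL : ∀ i, 0 ≤ αL i)
    (hbound : ∀ i, ∀ y ∈ Set.Icc (l i) (u i),
      ηL i * y ^ 2 + αL i * (y + βL i) ≤ σ y ∧ σ y ≤ ηU i * y ^ 2 + αU i * (y + βU i))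
    (j : Fin n₂) :
    (∀ x : Fin n₀ → ℝ, (∀ i, (W1.mulVec x + b1) i ∈ Set.Icc (l i) (u i)) →
      -- lower bound
      (∑ i, W2 j i *
          (if 0 ≤ W2 j i then
            ηL i * ((W1.mulVec x + b1) i) ^ 2 + αL i * ((W1.mulVec x + b1) i + βL i)
          else
            ηU i * ((W1.mulVec x + b1) i) ^ 2 + αU i * ((W1.mulVec x + b1) i + βU i))) + b2 j
        ≤ (∑ i, W2 j i * σ ((W1.mulVec x + b1) i)) + b2 j ∧
      -- upper bound
      (∑ i, W2 j i * σ ((W1.mulVec x + b1) i)) + b2 j ≤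
        (∑ i, W2 j i *
          (if 0 ≤ W2 j i then
            ηU i * ((W1.mulVec x + b1) i) ^ 2 + αU i * ((W1.mulVec x + b1) i + βU i)
          else
            ηL i * ((W1.mulVec x + b1) i) ^ 2 + αL i * ((W1.mulVec x + b1) i + βL i))) + b2 j) ∧
    -- the upper bounding expression is a quadratic form `xᵀ W1ᵀ D W1 x + cᵀ x + s` with `D` diagonal
    (∃ (D : Fin n₁ → ℝ) (c : Fin n₀ → ℝ) (s : ℝ), ∀ x : Fin n₀ → ℝ,
      (∑ i, W2 j i *
          (if 0 ≤ W2 j i then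
            ηU i * ((W1.mulVec x + b1) i) ^ 2 + αU i * ((W1.mulVec x + b1) i + βU i)
          else
            ηL i * ((W1.mulVec x + b1) i) ^ 2 + αL i * ((W1.mulVec x + b1) i + βL i))) + b2 j
        = x ⬝ᵥ (W1.transpose * Matrix.diagonal D * W1).mulVec x + c ⬝ᵥ x + s) ∧
    -- and so is the lower bounding expression
    (∃ (D : Fin n₁ → ℝ) (c : Fin n₀ → ℝ) (s : ℝ), ∀ x : Fin n₀ → ℝ,
      (∑ i, W2 j i *
          (if 0 ≤ W2 j i then
            ηL i * ((W1.mulVec x + b1) i) ^ 2 + αL i * ((W1.mulVec x + b1) i + βL i)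
          else
            ηU i * ((W1.mulVec x + b1) i) ^ 2 + αU i * ((W1.mulVec x + b1) i + βU i))) + b2 j
        = x ⬝ᵥ (W1.transpose * Matrix.diagonal D * W1).mulVec x + c ⬝ᵥ x + s) := by
  refine ⟨fun x hx => ⟨?_, ?_⟩, ?_, ?_⟩
  · refine add_le_add_left (Finset.sum_le_sum fun i _ => ?_) _
    set y := (W1.mulVec x + b1) i with hy
    rcases hbound i y (hx i) with ⟨hL, hU⟩
    split_ifs with h
    · exact mul_le_mul_of_nonneg_left hL h
    · exact mul_le_mul_of_nonpos_left hU (le_of_lt (lt_of_not_ge h))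
  · refine add_le_add_left (Finset.sum_le_sum fun i _ => ?_) _
    set y := (W1.mulVec x + b1) i with hy
    rcases hbound i y (hx i) with ⟨hL, hU⟩
    split_ifs with h
    · exact mul_le_mul_of_nonneg_left hU h
    · exact mul_le_mul_of_nonpos_left hL (le_of_lt (lt_of_not_ge h))
  · obtain ⟨c, s, hcs⟩ := crown_quadform_aux W1 b1
      (fun i => W2 j i * (if 0 ≤ W2 j i then ηU i else ηL i))
      (fun i => W2 j i * (if 0 ≤ W2 j i then αU i else αL i))
      (fun i => if 0 ≤ W2 j i then βU i else βL i) (b2 j)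
    refine ⟨(fun i => W2 j i * (if 0 ≤ W2 j i then ηU i else ηL i)), c, s, fun x => ?_⟩
    rw [← hcs x]
    congr 1
    exact Finset.sum_congr rfl fun i _ => by split_ifs <;> ring
  · obtain ⟨c, s, hcs⟩ := crown_quadform_aux W1 b1
      (fun i => W2 j i * (if 0 ≤ W2 j i then ηL i else ηU i))
      (fun i => W2 j i * (if 0 ≤ W2 j i then αL i else αU i))
      (fun i => if 0 ≤ W2 j i then βL i else βU i) (b2 j)
    refine ⟨(fun i => W2 j i * (if 0 ≤ W2 j i then ηL i else ηU i)), c, s, fun x => ?_⟩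
    rw [← hcs x]
    congr 1
    exact Finset.sum_congr rfl fun i _ => by split_ifs <;> ring
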